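/- Suppose A ∈ ℝ^{n×n}, p, β ∈ ℝⁿ, κ, μ > 0, g ≥ 0 satisfy (diag(p)A + (β - g p)pᵀ)ˢ = 0 and Aᵀp = -(μ - gκ)p - κβ. Then along the flow ẋ = diag(x)A(x - 1ₙ), the quantity S(x) = pᵀ(x - 1ₙ) + κ satisfies Ṡ = -S(β - gp)ᵀ(x - 1ₙ) - μ(S - κ) on the interior of the positive orthant. -/

import Mathlib

open Matrix

lemma fderiv_dot (n : ℕ) (p : Fin n → ℝ) (κ : ℝ) (S : (Fin n → ℝ) → ℝ)
    (hS : ∀ x : Fin n → ℝ, S x = p ⬝ᵥ (x - 1) + κ) (x v : Fin n → ℝ) :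
    fderiv ℝ S x v = p ⬝ᵥ v := by
  have hd : HasFDerivAt S
      (∑ i : Fin n, p i • (ContinuousLinearMap.proj i : (Fin n → ℝ) →L[ℝ] ℝ)) x := by
    have : HasFDerivAt (fun x : Fin n → ℝ => (∑ i : Fin n, p i * (x i - 1)) + κ)
        (∑ i : Fin n, p i • (ContinuousLinearMap.proj i : (Fin n → ℝ) →L[ℝ] ℝ)) x := by
      apply HasFDerivAt.add_const
      apply HasFDerivAt.fun_sum
      intro i _
      exact ((hasFDerivAt_apply i x).sub_const 1).const_mul (p i)
    convert this using 2 with x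
    rw [hS x, dotProduct]
    simp [Pi.sub_apply]
  rw [hd.fderiv]
  simp [dotProduct, ContinuousLinearMap.proj]

/-- Under (diag(p)A + (β - g p)pᵀ)ˢ = 0 and Aᵀp = -(μ-gκ)p - κβ,
along ẋ = diag(x)A(x-1ₙ) the quantity S(x) = pᵀ(x-1ₙ) + κ satisfies
Ṡ = -S(β - gp)ᵀ(x-1ₙ) - μ(S - κ) on the interior of the positive orthant. -/
theorem stmt3 (n : ℕ) (A : Matrix (Fin n) (Fin n) ℝ) (p β : Fin n → ℝ)
    (κ μ g : ℝ) (hκ : 0 < κ) (hμ : 0 < μ) (hg : 0 ≤ g)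
    (h1 : (1/2 : ℝ) • ((Matrix.diagonal p * A + Matrix.vecMulVec (β - g • p) p)
        + (Matrix.diagonal p * A + Matrix.vecMulVec (β - g • p) p)ᵀ) = 0)
    (h2 : Aᵀ *ᵥ p = -(μ - g * κ) • p - κ • β)
    (S : (Fin n → ℝ) → ℝ)
    (hS : ∀ x : Fin n → ℝ, S x = p ⬝ᵥ (x - 1) + κ)
    (F : (Fin n → ℝ) → (Fin n → ℝ))
    (hF : ∀ x : Fin n → ℝ, F x = fun i => x i * (A *ᵥ (x - 1)) i) :
    ∀ x : Fin n → ℝ, (∀ i, 0 < x i) →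
      fderiv ℝ S x (F x)
        = -(S x) * ((β - g • p) ⬝ᵥ (x - 1)) - μ * (S x - κ) := by
  intro x hx
  set M := Matrix.diagonal p * A + Matrix.vecMulVec (β - g • p) p with hMdef
  have hM : M + Mᵀ = 0 := by
    have h2ne : (1/2 : ℝ) ≠ 0 := by norm_num
    rcases smul_eq_zero.mp h1 with h | h
    · exact absurd h h2ne
    · exact h
  set y : Fin n → ℝ := x - 1 with hy
  -- quadratic form vanishes
  have hquad : y ⬝ᵥ (M *ᵥ y) = 0 := by
    have h0 : y ⬝ᵥ ((M + Mᵀ) *ᵥ y) = 0 := by rw [hM]; simp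
    rw [Matrix.add_mulVec, dotProduct_add] at h0
    have ht : y ⬝ᵥ (Mᵀ *ᵥ y) = y ⬝ᵥ (M *ᵥ y) := by
      rw [Matrix.dotProduct_mulVec, Matrix.vecMul_transpose, dotProduct_comm]
    rw [ht] at h0
    linarith
  have hdot : fderiv ℝ S x (F x) = p ⬝ᵥ F x := fderiv_dot n p κ S hS x (F x)
  -- expand p ⬝ᵥ F x
  have hexp : p ⬝ᵥ F x = y ⬝ᵥ ((Matrix.diagonal p * A) *ᵥ y) + (Aᵀ *ᵥ p) ⬝ᵥ y := by
    rw [hF x]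
    simp only [← hy]
    have hda : (Matrix.diagonal p * A) *ᵥ y = fun i => p i * (A *ᵥ y) i := by
      rw [← Matrix.mulVec_mulVec]
      funext i
      simp [Matrix.mulVec_diagonal]
    have hta : (Aᵀ *ᵥ p) ⬝ᵥ y = p ⬝ᵥ (A *ᵥ y) := by
      rw [Matrix.mulVec_transpose, ← Matrix.dotProduct_mulVec]
    rw [hda, hta]
    simp only [dotProduct]
    rw [← Finset.sum_add_distrib]
    apply Finset.sum_congr rfl
    intro i _
    have hyi : y i = x i - 1 := by simp [hy]
    rw [hyi]
    ring
  have hdiag : y ⬝ᵥ ((Matrix.diagonal p * A) *ᵥ y)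
      = -(((β - g • p) ⬝ᵥ y) * (p ⬝ᵥ y)) := by
    have hv : Matrix.vecMulVec (β - g • p) p *ᵥ y = (p ⬝ᵥ y) • (β - g • p) := by
      funext i
      simp only [Matrix.mulVec, Matrix.vecMulVec_apply, dotProduct, Pi.smul_apply,
        smul_eq_mul]
      rw [Finset.sum_mul]
      exact Finset.sum_congr rfl fun j _ => by ring
    have h0 : y ⬝ᵥ ((Matrix.diagonal p * A) *ᵥ y)
        + y ⬝ᵥ (Matrix.vecMulVec (β - g • p) p *ᵥ y) = 0 := by
      rw [← dotProduct_add, ← Matrix.add_mulVec]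
      exact hquad
    rw [hv, dotProduct_smul, smul_eq_mul, dotProduct_comm y (β - g • p)] at h0
    linarith [mul_comm (p ⬝ᵥ y) ((β - g • p) ⬝ᵥ y)]
  have hlin : (Aᵀ *ᵥ p) ⬝ᵥ y = -(μ - g * κ) * (p ⬝ᵥ y) - κ * (β ⬝ᵥ y) := by
    rw [h2]
    simp [sub_dotProduct, smul_dotProduct]
  have hSx : S x = p ⬝ᵥ y + κ := by rw [hS x]
  have hbgp : (β - g • p) ⬝ᵥ y = β ⬝ᵥ y - g * (p ⬝ᵥ y) := by
    simp [sub_dotProduct, smul_dotProduct]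
  rw [hdot, hexp, hdiag, hlin, hSx]
  show _ = -(p ⬝ᵥ y + κ) * ((β - g • p) ⬝ᵥ y) - μ * (p ⬝ᵥ y + κ - κ)
  rw [hbgp]
  ring
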